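/- Let V be a K(x)-vector-space basis of A, and let a ∈ K[x] and B ∈ K[x]^{n×n} be such that aV′ = BV. Fix u ∈ K[x] and define φ_V : K[x]^n → u^{−2}K[x]^n by φ_V(p) = (a u p′ − a u′ p + u p B)/u². If deg_x(B) ≤ deg_x(a) − 1, then the standard complement N_V of im(φ_V) is a finite-dimensional K-vector space. -/

import Mathlib

noncomputable section
open scoped Classical
open Polynomial

/-! ### The algebraic function field `A = K(x)[y]/⟨m⟩` -/

/-- The canonical image in `A = K(x)[y]/⟨m⟩` of a polynomial `p ∈ K[x]`. -/
def toA {K : Type} [Field K] (m : Polynomial (RatFunc K)) (p : Polynomial K) :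
    AdjoinRoot m :=
  algebraMap (RatFunc K) (AdjoinRoot m) (algebraMap (Polynomial K) (RatFunc K) p)

/-- `D` is the derivation on `A = K(x)[y]/⟨m⟩` extending `d/dx` on `K(x)`:
it is additive, satisfies the Leibniz rule, and restricts to `d/dx` on `K[x]`
(hence, being a derivation on a field, on all of `K(x)`). -/
structure IsDerivationOnA {K : Type} [Field K] (m : Polynomial (RatFunc K))
    (D : AdjoinRoot m → AdjoinRoot m) : Prop where
  map_add : ∀ f g, D (f + g) = D f + D g
  leibniz : ∀ f g, D (f * g) = f * D g + g * D f
  map_poly : ∀ p : Polynomial K, D (toA m p) = toA m (Polynomial.derivative p)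

/-- `W` is a basis of `A` as a vector space over `K(x)`. -/
def IsKxBasis {K : Type} [Field K] {m : Polynomial (RatFunc K)}
    (W : Fin m.natDegree → AdjoinRoot m) : Prop :=
  LinearIndependent (RatFunc K) W ∧ Submodule.span (RatFunc K) (Set.range W) = ⊤

/-- `e W′ = M W` componentwise. -/
def DerivRel {K : Type} [Field K] {m : Polynomial (RatFunc K)}
    (D : AdjoinRoot m → AdjoinRoot m) (W : Fin m.natDegree → AdjoinRoot m)
    (e : Polynomial K) (M : Matrix (Fin m.natDegree) (Fin m.natDegree) (Polynomial K)) : Prop :=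
  ∀ i, toA m e * D (W i) = ∑ j, toA m (M i j) * W j

/-- `gcd(e, m₁₁, …, mₙₙ) = 1`: the only common divisors of `e` and the entries of `M`
are units. -/
def GcdOne {K : Type} [Field K] {n : ℕ}
    (e : Polynomial K) (M : Matrix (Fin n) (Fin n) (Polynomial K)) : Prop :=
  ∀ p : Polynomial K, p ∣ e → (∀ i j, p ∣ M i j) → IsUnit p


/-! ### Polynomial reduction -/

/-- The map `φ_V` for polynomial reduction with respect to `u` and `V` (where `aV′ = BV`):
`φ_V(p) = (a u p′ − a u′ p + u p B)/u²`, a vector of rational functions. -/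
def phiV {K : Type} [Field K] {n : ℕ} (a u : Polynomial K)
    (B : Matrix (Fin n) (Fin n) (Polynomial K)) (p : Fin n → Polynomial K) :
    Fin n → RatFunc K := fun j =>
  algebraMap (Polynomial K) (RatFunc K)
      (a * u * Polynomial.derivative (p j) - a * Polynomial.derivative u * p j
        + u * ∑ i, p i * B i j) /
    algebraMap (Polynomial K) (RatFunc K) (u ^ 2)

/-- `im(φ_V) ∩ K[x]^n`: the set of polynomial vectors lying in the image of `φ_V`. -/
def phiPolyImage {K : Type} [Field K] {n : ℕ} (a u : Polynomial K)
    (B : Matrix (Fin n) (Fin n) (Polynomial K)) : Set (Fin n → Polynomial K) :=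
  {q | ∃ p : Fin n → Polynomial K,
    ∀ j, algebraMap (Polynomial K) (RatFunc K) (q j) = phiV a u B p j}

/-- The degree of a vector `p ∈ K[x]^n`, viewed as a polynomial in `x` with coefficients
in `K^n`. -/
def vdeg {K : Type} [Field K] {n : ℕ} (p : Fin n → Polynomial K) : ℕ :=
  Finset.univ.sup fun i => (p i).natDegree

/-- The leading term `lt(p) = p^{(r)} x^r` of a nonzero vector `p ∈ K[x]^n`, viewed as a
polynomial in `x` with coefficients in `K^n`. -/
def ltVec {K : Type} [Field K] {n : ℕ} (p : Fin n → Polynomial K) :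
    Fin n → Polynomial K :=
  fun i => Polynomial.C ((p i).coeff (vdeg p)) * Polynomial.X ^ (vdeg p)

/-- The monomial vector `e_i x^j` (an element of the set `S`). -/
def monomialVec {K : Type} [Field K] {n : ℕ} (i : Fin n) (j : ℕ) :
    Fin n → Polynomial K :=
  fun k => if k = i then Polynomial.X ^ j else 0

/-- The standard complement `N_V` of `im(φ_V)`: the `K`-subspace of `K[x]^n` spanned by the
monomial vectors `e_i x^j ∈ S` that are not the leading term of any (nonzero) element of
`im(φ_V) ∩ K[x]^n`. -/
def NVcomplement {K : Type} [Field K] {n : ℕ} (a u : Polynomial K)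
    (B : Matrix (Fin n) (Fin n) (Polynomial K)) : Submodule K (Fin n → Polynomial K) :=
  Submodule.span K {t | ∃ i j, t = monomialVec i j ∧
    ∀ q ∈ phiPolyImage a u B, q ≠ 0 → t ≠ ltVec q}

/-! ### Auxiliary lemmas -/

lemma eval_charpoly' {K : Type} [Field K] {n : ℕ} (A : Matrix (Fin n) (Fin n) K) (t : K) :
    (Matrix.charpoly A).eval t = (t • (1 : Matrix (Fin n) (Fin n) K) - A).det := by
  rw [Matrix.charpoly, Polynomial.eval, ← Polynomial.coe_eval₂RingHom, RingHom.map_det]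
  congr 1
  ext i j
  by_cases h : i = j <;>
    simp [h, Matrix.charmatrix_apply, Matrix.one_apply, Matrix.diagonal_apply,
      Matrix.map_apply, Matrix.sub_apply, Matrix.smul_apply]

lemma exists_ltVec_eq {K : Type} [Field K] [CharZero K] {n : ℕ} (hn : 0 < n)
    (a u : Polynomial K) (hu0 : u ≠ 0)
    (B : Matrix (Fin n) (Fin n) (Polynomial K))
    (hdeg : ∀ i j, (B i j).degree < a.degree) :
    ∃ R : ℕ, ∀ (i : Fin n) (r : ℕ), R ≤ r →
      ∃ q ∈ phiPolyImage a u B, q ≠ 0 ∧ monomialVec i r = ltVec q := by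
  have ha : a ≠ 0 := by
    intro h
    exact absurd (hdeg ⟨0, hn⟩ ⟨0, hn⟩) (by simp [h])
  have hlc : a.leadingCoeff ≠ 0 := Polynomial.leadingCoeff_ne_zero.mpr ha
  set d := a.natDegree with hd
  set M : Matrix (Fin n) (Fin n) K := fun l k => (B l k).coeff (d - 1) with hM
  set P := Matrix.charpoly (-M.transpose) with hP
  have hP0 : P ≠ 0 := (Matrix.charpoly_monic _).ne_zero
  set c : ℕ → K := fun s => ((s : K) + 1) * a.leadingCoeff with hc
  have hcinj : Function.Injective c := by
    intro s t h
    have h2 : ((s : K)) + 1 = (t : K) + 1 := mul_right_cancel₀ hlc h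
    have h3 : ((s : K)) = (t : K) := by linear_combination h2
    exact_mod_cast h3
  have hbadfin : {s : ℕ | P.IsRoot (c s)}.Finite :=
    Set.Finite.preimage hcinj.injOn (Polynomial.finite_setOf_isRoot hP0)
  obtain ⟨S, hS⟩ := hbadfin.bddAbove
  refine ⟨d + S + 1, fun i r hr => ?_⟩
  set s := r - d with hs
  have hrs : r = d + s := by omega
  have hsbad : ¬ P.IsRoot (c s) := by
    intro hroot
    have : s ≤ S := hS hroot
    omega
  set A1 : Matrix (Fin n) (Fin n) K := c s • 1 + M.transpose with hA1
  have hdet : A1.det ≠ 0 := by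
    have hA1' : A1 = c s • 1 - (-M.transpose) := by rw [hA1, sub_neg_eq_add]
    rw [hA1', ← eval_charpoly']
    exact hsbad
  set v : Fin n → K := (A1⁻¹).mulVec (Pi.single i 1) with hv
  have hAv : A1.mulVec v = Pi.single i 1 := by
    rw [hv, Matrix.mulVec_mulVec, Matrix.mul_nonsing_inv _ hdet.isUnit, Matrix.one_mulVec]
  set w : Fin n → Polynomial K := fun k => ∑ l, Polynomial.C (v l) * B l k with hw
  set q : Fin n → Polynomial K :=
    fun k => Polynomial.C (((s : K) + 1) * v k) * (a * Polynomial.X ^ s)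
      + Polynomial.X ^ (s + 1) * w k with hq
  -- the coefficient of `q k` in degree `d + s`
  have hcoe : ∀ k, (q k).coeff (d + s) = (Pi.single i 1 : Fin n → K) k := by
    intro k
    have h1 : (Polynomial.C (((s : K) + 1) * v k) * (a * Polynomial.X ^ s)).coeff (d + s)
        = ((s : K) + 1) * v k * a.leadingCoeff := by
      rw [Polynomial.coeff_C_mul, Polynomial.coeff_mul_X_pow]
      rfl
    have h2 : (Polynomial.X ^ (s + 1) * w k).coeff (d + s) = ∑ l, v l * M l k := by
      rcases Nat.eq_zero_or_pos d with hd0 | hd1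
      · have hB : ∀ l, B l k = 0 := by
          intro l
          by_contra hBne
          have h0le : (0 : WithBot ℕ) ≤ (B l k).degree :=
            Polynomial.zero_le_degree_iff.mpr hBne
          have hda : a.degree = (0 : ℕ) := by
            rw [Polynomial.degree_eq_natDegree ha, ← hd, hd0]
          exact absurd (hdeg l k) (by rw [hda]; exact not_lt.mpr h0le)
        have hwk : w k = 0 := by simp [hw, hB]
        have hMk : ∀ l, M l k = 0 := by intro l; simp [hM, hB l]
        simp [hwk, hMk]
      · obtain ⟨d', hd' ⟩ : ∃ d', d = d' + 1 := ⟨d - 1, by omega⟩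
        rw [show d + s = d' + (s + 1) by omega, Polynomial.coeff_X_pow_mul]
        rw [hw, Polynomial.finset_sum_coeff]
        refine Finset.sum_congr rfl fun l _ => ?_
        rw [Polynomial.coeff_C_mul, hM]
        show v l * (B l k).coeff d' = v l * (B l k).coeff (d - 1)
        rw [show d' = d - 1 by omega]
    have h3 : (q k).coeff (d + s) = (A1.mulVec v) k := by
      simp only [hq, Polynomial.coeff_add, h1, h2]
      simp only [Matrix.mulVec, dotProduct, hA1, Matrix.add_apply, Matrix.smul_apply,
        Matrix.one_apply, Matrix.transpose_apply, smul_eq_mul, add_mul,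
        Finset.sum_add_distrib, mul_ite, mul_one, mul_zero, ite_mul, zero_mul,
        Finset.sum_ite_eq, Finset.mem_univ, if_true, hc]
      ring_nf
      rw [Finset.sum_congr rfl fun l _ => mul_comm (v l) (M l k)]
    rw [h3, hAv]
  -- degree bound
  have hdegle : ∀ k, (q k).natDegree ≤ d + s := by
    intro k
    refine le_trans (Polynomial.natDegree_add_le _ _) (max_le ?_ ?_)
    · refine le_trans (Polynomial.natDegree_C_mul_le _ _) ?_
      refine le_trans (Polynomial.natDegree_mul_le) ?_
      simp [Polynomial.natDegree_X_pow, ← hd]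
    · by_cases hwk : w k = 0
      · simp [hwk]
      · have hBlt : ∀ l, B l k ≠ 0 → (B l k).natDegree < d := fun l h =>
          Polynomial.natDegree_lt_natDegree h (hdeg l k)
        have hex : ∃ l, B l k ≠ 0 := by
          by_contra hno
          push_neg at hno
          exact hwk (by simp [hw, hno])
        obtain ⟨l, hl⟩ := hex
        have hd1 : 1 ≤ d := by have := hBlt l hl; omega
        have hwd : (w k).natDegree ≤ d - 1 := by
          rw [hw]
          refine Polynomial.natDegree_sum_le_of_forall_le _ _ fun l' _ => ?_
          refine le_trans (Polynomial.natDegree_C_mul_le _ _) ?_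
          by_cases hB : B l' k = 0
          · simp [hB]
          · have := hBlt l' hB; omega
        refine le_trans (Polynomial.natDegree_mul_le) ?_
        rw [Polynomial.natDegree_X_pow]
        omega
  have hq_i : (q i).coeff (d + s) = 1 := by rw [hcoe i, Pi.single_eq_same]
  have hvd : vdeg q = d + s := by
    refine le_antisymm (Finset.sup_le fun k _ => hdegle k) ?_
    have hle1 : d + s ≤ (q i).natDegree :=
      Polynomial.le_natDegree_of_ne_zero (by rw [hq_i]; exact one_ne_zero)
    have hle2 : (q i).natDegree ≤ vdeg q :=
      Finset.le_sup (f := fun k => (q k).natDegree) (Finset.mem_univ i)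
    exact le_trans hle1 hle2
  have hq0 : q ≠ 0 := by
    intro h
    rw [h] at hq_i
    simp at hq_i
  have hlt : monomialVec i r = ltVec q := by
    funext k
    simp only [ltVec, monomialVec, hvd, hcoe k, hrs]
    by_cases hk : k = i
    · rw [if_pos hk, hk, Pi.single_eq_same, Polynomial.C_1, one_mul]
    · rw [if_neg hk, Pi.single_eq_of_ne hk, Polynomial.C_0, zero_mul]
  have hne : algebraMap (Polynomial K) (RatFunc K) (u ^ 2) ≠ 0 :=
    RatFunc.algebraMap_ne_zero (pow_ne_zero 2 hu0)
  have hmem : q ∈ phiPolyImage a u B := by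
    refine ⟨fun k => u * (Polynomial.C (v k) * Polynomial.X ^ (s + 1)), fun k => ?_⟩
    have hders : Polynomial.derivative (Polynomial.X ^ (s + 1) : Polynomial K)
        = Polynomial.C ((s : K) + 1) * Polynomial.X ^ s := by
      rw [Polynomial.derivative_X_pow]
      push_cast
      simp
    have hsum : (∑ l, (u * (Polynomial.C (v l) * Polynomial.X ^ (s + 1))) * B l k)
        = u * (Polynomial.X ^ (s + 1) * w k) := by
      simp only [hw, Finset.mul_sum]
      exact Finset.sum_congr rfl fun l _ => by ring
    have hnum : a * u * Polynomial.derivative (u * (Polynomial.C (v k) * Polynomial.X ^ (s + 1)))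
        - a * Polynomial.derivative u * (u * (Polynomial.C (v k) * Polynomial.X ^ (s + 1)))
        + u * ∑ l, (u * (Polynomial.C (v l) * Polynomial.X ^ (s + 1))) * B l k
        = u ^ 2 * q k := by
      rw [hsum, Polynomial.derivative_mul, Polynomial.derivative_mul,
        Polynomial.derivative_C, hders, hq]
      simp only [Polynomial.C_mul]
      ring
    simp only [phiV]
    rw [hnum, map_mul, mul_div_cancel_left₀ _ hne]
  exact ⟨q, hmem, hq0, hlt⟩

/-- Let `V` be a `K(x)`-vector-space basis of `A`, and let `a ∈ K[x]` and
`B ∈ K[x]^{n×n}` be such that `aV′ = BV`. Fix `u ∈ K[x]` and define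
`φ_V(p) = (a u p′ − a u′ p + u p B)/u²`. If `deg_x(B) ≤ deg_x(a) − 1`, then the standard
complement `N_V` of `im(φ_V)` is a finite-dimensional `K`-vector space. -/
theorem NV_finiteDimensional {K : Type} [Field K] [CharZero K]
    (m : Polynomial (RatFunc K)) [Fact (Irreducible m)]
    (D : AdjoinRoot m → AdjoinRoot m) (hD : IsDerivationOnA m D)
    (V : Fin m.natDegree → AdjoinRoot m) (hV : IsKxBasis V)
    (a u : Polynomial K) (hu0 : u ≠ 0)
    (B : Matrix (Fin m.natDegree) (Fin m.natDegree) (Polynomial K))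
    (hrel : DerivRel D V a B)
    (hdeg : ∀ i j, (B i j).degree < a.degree) :
    FiniteDimensional K (NVcomplement a u B) := by
  unfold NVcomplement
  apply FiniteDimensional.span_of_finite
  rcases Nat.eq_zero_or_pos m.natDegree with hn | hn
  · refine Set.Finite.subset Set.finite_empty ?_
    rintro t ⟨i, _, _, _⟩
    exact absurd i.2 (by omega)
  · obtain ⟨R, hR⟩ := exists_ltVec_eq hn a u hu0 B hdeg
    refine Set.Finite.subset
      (Set.Finite.image (fun p : Fin m.natDegree × ℕ => monomialVec p.1 p.2)
        (Set.Finite.prod Set.finite_univ (Set.finite_Iio R))) ?_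
    rintro t ⟨i, j, rfl, hT⟩
    refine ⟨(i, j), ⟨Set.mem_univ _, ?_⟩, rfl⟩
    by_contra hj
    simp only [Set.mem_Iio, not_lt] at hj
    obtain ⟨q, hqmem, hq0, hlt⟩ := hR i j hj
    exact hT q hqmem hq0 hlt
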